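/- Let x_j be a continuous, globally bounded, strictly sub-luminal trajectory with advanced light-cone time t⁺(t,x), advanced delay function φ(t,x), and unit normal field n̂(t,x). Let (t₀, x₀) satisfy φ(t₀, x₀) > 0 and assume x_j is continuously differentiable on a neighborhood of s₀ = t⁺(t₀, x₀) with ‖x_j′‖ < 1 there; write v = x_j′(s₀) and n̂ = n̂(t₀, x₀). Then the map t ↦ n̂(t, x₀) is differentiable at t₀ with derivative ∂n̂/∂t(t₀, x₀) = (⟪n̂, v⟫ n̂ − v) / (φ(t₀, x₀)(1 + ⟪n̂, v⟫)). -/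

import Mathlib

open scoped RealInnerProductSpace

private lemma hasDerivAt_norm_aux {E : Type*} [NormedAddCommGroup E] [InnerProductSpace ℝ E]
    {f : ℝ → E} {f' : E} {t : ℝ} (hf : HasDerivAt f f' t) (h0 : f t ≠ 0) :
    HasDerivAt (fun s => ‖f s‖) ⟪‖f t‖⁻¹ • f t, f'⟫ t := by
  have hq : HasDerivAt (fun s => ‖f s‖ ^ 2) (2 * ⟪f t, f'⟫) t := hf.norm_sq
  have hne : ‖f t‖ ^ 2 ≠ 0 := pow_ne_zero _ (norm_ne_zero_iff.2 h0)
  have hs := hq.sqrt hne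
  have heq : (fun s => Real.sqrt (‖f s‖ ^ 2)) = fun s => ‖f s‖ :=
    funext fun s => Real.sqrt_sq (norm_nonneg _)
  rw [heq] at hs
  convert hs using 1
  rw [Real.sqrt_sq (norm_nonneg _), real_inner_smul_left]
  have : ‖f t‖ ≠ 0 := norm_ne_zero_iff.2 h0
  field_simp

/-- time derivative of the unit normal field of the advanced light cone. -/
theorem stmt_5 (xj : ℝ → EuclideanSpace ℝ (Fin 3))
    (hcont : Continuous xj)
    (hbdd : Bornology.IsBounded (Set.range xj))
    (hsub : ∀ a b : ℝ, a ≠ b → ‖xj a - xj b‖ < |a - b|)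
    (tplus : ℝ → EuclideanSpace ℝ (Fin 3) → ℝ)
    (htp : ∀ t x, tplus t x = t + ‖x - xj (tplus t x)‖)
    (t₀ : ℝ) (x₀ : EuclideanSpace ℝ (Fin 3))
    (hpos : 0 < ‖x₀ - xj (tplus t₀ x₀)‖)
    (v' : ℝ → EuclideanSpace ℝ (Fin 3)) (U : Set ℝ)
    (hU : U ∈ nhds (tplus t₀ x₀))
    (hderiv : ∀ s ∈ U, HasDerivAt xj (v' s) s)
    (hcv : ContinuousOn v' U)
    (hlum : ∀ s ∈ U, ‖v' s‖ < 1)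
    (v : EuclideanSpace ℝ (Fin 3)) (hv : v = v' (tplus t₀ x₀))
    (nhat : EuclideanSpace ℝ (Fin 3))
    (hn : nhat = ‖x₀ - xj (tplus t₀ x₀)‖⁻¹ • (x₀ - xj (tplus t₀ x₀))) :
    HasDerivAt
      (fun t => ‖x₀ - xj (tplus t x₀)‖⁻¹ • (x₀ - xj (tplus t x₀)))
      ((‖x₀ - xj (tplus t₀ x₀)‖ * (1 + ⟪nhat, v⟫))⁻¹ • (⟪nhat, v⟫ • nhat - v)) t₀ := by
  set s₀ := tplus t₀ x₀ with hs₀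
  set σ : ℝ → ℝ := fun t => tplus t x₀ with hσdef
  set g : ℝ → ℝ := fun s => s - ‖x₀ - xj s‖ with hgdef
  set φ₀ : ℝ := ‖x₀ - xj s₀‖ with hφ₀
  set α : ℝ := ⟪nhat, v⟫ with hα
  have hs₀U : s₀ ∈ U := mem_of_mem_nhds hU
  have hφ₀pos : (0:ℝ) < φ₀ := hpos
  have hφ₀ne : φ₀ ≠ 0 := ne_of_gt hφ₀pos
  have hF0ne : x₀ - xj s₀ ≠ 0 := norm_pos_iff.mp hpos
  -- g ∘ σ = id
  have hgσ : ∀ t, g (σ t) = t := by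
    intro t
    have := htp t x₀
    simp only [hgdef, hσdef]
    linarith
  -- strict monotonicity of g
  have hmono : StrictMono g := by
    intro a b hab
    have h1 : ‖x₀ - xj b‖ - ‖x₀ - xj a‖ ≤ ‖(x₀ - xj b) - (x₀ - xj a)‖ :=
      norm_sub_norm_le _ _
    have h2 : (x₀ - xj b) - (x₀ - xj a) = xj a - xj b := by abel
    have h3 : ‖xj a - xj b‖ < |a - b| := hsub a b (ne_of_lt hab)
    rw [abs_of_neg (by linarith : a - b < 0)] at h3
    simp only [hgdef]
    rw [h2] at h1
    linarith
  -- continuity of g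
  have hgc : Continuous g := continuous_id.sub ((continuous_const.sub hcont).norm)
  -- surjectivity of g
  have hsurj : Function.Surjective g := by
    obtain ⟨C, hC⟩ := hbdd.exists_norm_le
    have hub : ∀ s, g s ≤ s := by
      intro s; simp only [hgdef]; have := norm_nonneg (x₀ - xj s); linarith
    have hlb : ∀ s, s - (‖x₀‖ + C) ≤ g s := by
      intro s
      have h1 : ‖x₀ - xj s‖ ≤ ‖x₀‖ + ‖xj s‖ := norm_sub_le _ _
      have h2 : ‖xj s‖ ≤ C := hC _ ⟨s, rfl⟩
      simp only [hgdef]; linarith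
    apply hgc.surjective
    · exact Filter.tendsto_atTop_mono hlb (Filter.tendsto_atTop_add_const_right _ _ Filter.tendsto_id)
    · exact Filter.tendsto_atBot_mono hub Filter.tendsto_id
  -- σ is continuous (inverse of strictly monotone surjection)
  have hσeq : σ = fun t => (StrictMono.orderIsoOfSurjective g hmono hsurj).symm t := by
    funext t
    apply (StrictMono.orderIsoOfSurjective g hmono hsurj).injective
    rw [OrderIso.apply_symm_apply]
    rw [show ((StrictMono.orderIsoOfSurjective g hmono hsurj) (σ t) : ℝ) = g (σ t) from rfl]
    exact hgσ t
  have hσcont : Continuous σ := by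
    rw [hσeq]
    exact ((StrictMono.orderIsoOfSurjective g hmono hsurj).toHomeomorph.symm).continuous
  -- derivative of g at s₀
  have hFd : HasDerivAt (fun s => x₀ - xj s) (-(v' s₀)) s₀ := (hderiv s₀ hs₀U).const_sub x₀
  have hnd : HasDerivAt (fun s => ‖x₀ - xj s‖) ⟪‖x₀ - xj s₀‖⁻¹ • (x₀ - xj s₀), -(v' s₀)⟫ s₀ :=
    hasDerivAt_norm_aux hFd hF0ne
  have hinner : ⟪‖x₀ - xj s₀‖⁻¹ • (x₀ - xj s₀), -(v' s₀)⟫ = -α := by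
    rw [← hn, ← hv, hα, inner_neg_right]
  rw [hinner] at hnd
  have hg' : HasDerivAt g (1 + α) s₀ := by
    have := (hasDerivAt_id' s₀).sub hnd
    exact this.congr_deriv (by ring)
  -- 1 + α > 0
  have hnhat1 : ‖nhat‖ = 1 := by
    rw [hn, norm_smul, norm_inv, norm_norm]
    exact inv_mul_cancel₀ hφ₀ne
  have hαlt : |α| < 1 := by
    calc |α| ≤ ‖nhat‖ * ‖v‖ := abs_real_inner_le_norm _ _
    _ = ‖v‖ := by rw [hnhat1, one_mul]
    _ < 1 := by rw [hv]; exact hlum s₀ hs₀U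
  have h1α : (0:ℝ) < 1 + α := by
    have := abs_lt.mp hαlt; linarith
  have h1αne : (1:ℝ) + α ≠ 0 := ne_of_gt h1α
  -- derivative of σ
  have hσ' : HasDerivAt σ (1 + α)⁻¹ t₀ := by
    apply HasDerivAt.of_local_left_inverse hσcont.continuousAt
      (show HasDerivAt g (1 + α) (σ t₀) from hg') h1αne
    exact Filter.Eventually.of_forall hgσ
  -- derivative of F t = x₀ - xj (σ t)
  have hxjσ : HasDerivAt (fun t => xj (σ t)) ((1 + α)⁻¹ • v' s₀) t₀ :=
    (hderiv s₀ hs₀U).scomp t₀ hσ'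
  have hF' : HasDerivAt (fun t => x₀ - xj (σ t)) (-((1 + α)⁻¹ • v' s₀)) t₀ :=
    hxjσ.const_sub x₀
  -- derivative of ‖F t‖
  have hnF : HasDerivAt (fun t => ‖x₀ - xj (σ t)‖)
      ⟪‖x₀ - xj (σ t₀)‖⁻¹ • (x₀ - xj (σ t₀)), -((1 + α)⁻¹ • v' s₀)⟫ t₀ :=
    hasDerivAt_norm_aux hF' (show x₀ - xj (σ t₀) ≠ 0 from hF0ne)
  have hinner2 : ⟪‖x₀ - xj (σ t₀)‖⁻¹ • (x₀ - xj (σ t₀)), -((1 + α)⁻¹ • v' s₀)⟫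
      = -((1 + α)⁻¹ * α) := by
    rw [show σ t₀ = s₀ from rfl, ← hn, inner_neg_right, real_inner_smul_right, ← hv]
  rw [hinner2] at hnF
  -- derivative of ‖F t‖⁻¹
  have hinv : HasDerivAt (fun t => ‖x₀ - xj (σ t)‖⁻¹)
      (-(-((1 + α)⁻¹ * α)) / ‖x₀ - xj (σ t₀)‖ ^ 2) t₀ :=
    hnF.inv (show ‖x₀ - xj (σ t₀)‖ ≠ 0 from hφ₀ne)
  -- assemble
  have hfinal := hinv.smul hF'
  have hF0eq : x₀ - xj s₀ = φ₀ • nhat := by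
    rw [hn, smul_smul, mul_inv_cancel₀ hφ₀ne, one_smul]
  have hns : ‖x₀ - xj s₀‖ = φ₀ := hφ₀.symm
  have hkey : ‖x₀ - xj (σ t₀)‖⁻¹ • (-((1 + α)⁻¹ • v' s₀))
      + (-(-((1 + α)⁻¹ * α)) / ‖x₀ - xj (σ t₀)‖ ^ 2) • (x₀ - xj (σ t₀))
      = (φ₀ * (1 + α))⁻¹ • (α • nhat - v) := by
    rw [show σ t₀ = s₀ from rfl, hns, hF0eq, hv]
    match_scalars <;> field_simp <;> ring
  rw [hkey] at hfinal
  exact hfinal
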